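/- arXiv:1109.5455 — 2 statements merged into one kernel-verified Lean document; each statement's English description precedes it below -/
import Mathlib

section
/- Combining the previous bounds: with u = α₁By + α₂y, α = -α₂/α₁ not an eigenvalue of L = X_⊥^H B X_⊥, the relative error of the approximate inner solution satisfies ε ≤ [2‖B‖ / (sep(α, L) · sin∠(𝒱, f))] · ε̃. -/
local notation "⟪" x ", " y "⟫" => @inner ℂ _ _ x y

-- helper: norm of v minus its projection is ≤ norm of v
lemma norm_sub_orthProj_le {E : Type*} [NormedAddCommGroup E] [InnerProductSpace ℂ E]
    [FiniteDimensional ℂ E] (K : Submodule ℂ E) (v : E) :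
    ‖v - (Submodule.orthogonalProjectionOnto K v : E)‖ ≤ ‖v‖ := by
  rw [show v - (Submodule.orthogonalProjectionOnto K v : E) = (Submodule.orthogonalProjectionOnto Kᗮ v : E) by rw [Submodule.orthogonalProjectionOnto_orthogonal]; rfl]
  calc ‖(Submodule.orthogonalProjectionOnto Kᗮ v : E)‖ = ‖Submodule.orthogonalProjectionOnto Kᗮ v‖ := rfl
    _ ≤ ‖Submodule.orthogonalProjectionOnto Kᗮ‖ * ‖v‖ := (Submodule.orthogonalProjectionOnto Kᗮ).le_opNorm v
    _ ≤ 1 * ‖v‖ := by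
        exact mul_le_mul_of_nonneg_right (Submodule.orthogonalProjectionOnto_norm_le _) (norm_nonneg _)
    _ = ‖v‖ := one_mul _

lemma norm_orthProj_le {E : Type*} [NormedAddCommGroup E] [InnerProductSpace ℂ E]
    [FiniteDimensional ℂ E] (K : Submodule ℂ E) (v : E) :
    ‖(Submodule.orthogonalProjectionOnto K v : E)‖ ≤ ‖v‖ := by
  calc ‖(Submodule.orthogonalProjectionOnto K v : E)‖ = ‖Submodule.orthogonalProjectionOnto K v‖ := rfl
    _ ≤ ‖Submodule.orthogonalProjectionOnto K‖ * ‖v‖ := (Submodule.orthogonalProjectionOnto K).le_opNorm v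
    _ ≤ 1 * ‖v‖ := mul_le_mul_of_nonneg_right (Submodule.orthogonalProjectionOnto_norm_le _) (norm_nonneg _)
    _ = ‖v‖ := one_mul _
set_option maxHeartbeats 1000000 in
/-- Theorem 3: combining the previous bounds,
`ε ≤ [2‖B‖ / (sep(α,L) · sin∠(𝒱,f))] · ε̃`, where `α = -α₂/α₁`,
`L` is the compression of `B` to the orthogonal complement of the eigenvector `x`,
and `sep(α,L) = ‖(L - αI)⁻¹‖⁻¹ = ‖M‖⁻¹`. -/
theorem eps_le_sep_bound {E : Type*} [NormedAddCommGroup E] [InnerProductSpace ℂ E]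
    [FiniteDimensional ℂ E]
    (B : E →L[ℂ] E) (lam σ : ℂ) (hlam : lam ≠ σ)
    (x : E) (hx : ‖x‖ = 1) (hBx : B x = (lam - σ)⁻¹ • x)
    (hB : 1 / ‖lam - σ‖ ≤ ‖B‖)
    (K : Submodule ℂ E)
    (y g : E) (hyK : y ∈ K) (hy : ‖y‖ = 1) (hg : ‖g‖ = 1) (hxg : ⟪x, g⟫ = 0)
    (c : ℂ) (s : ℝ) (hs : 0 ≤ s) (hc : ‖c‖ ≤ 1)
    (hdecomp : y = c • x + (s : ℂ) • g)
    (hsV : ‖x - (Submodule.orthogonalProjectionOnto K x : E)‖ ≤ s)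
    (a1 a2 : ℂ) (ha1 : a1 ≠ 0)
    (u ut f : E) (hu : u = a1 • B y + a2 • y) (hune : u ≠ 0)
    (hPu : u - (Submodule.orthogonalProjectionOnto K u : E) ≠ 0)
    (hBy : B y - (-(a2 / a1)) • y ≠ 0)
    (hne : ut ≠ u) (hf : f = ‖ut - u‖⁻¹ • (ut - u))
    (hfperp : ‖f - (Submodule.orthogonalProjectionOnto K f : E)‖ ≠ 0)
    (L M : (Submodule.span ℂ {x})ᗮ →L[ℂ] (Submodule.span ℂ {x})ᗮ)
    (hL : ∀ w : (Submodule.span ℂ {x})ᗮ,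
        L w = Submodule.orthogonalProjectionOnto (Submodule.span ℂ {x})ᗮ (B w))
    (hLM : (L - (-(a2 / a1)) • 1) * M = 1) (hML : M * (L - (-(a2 / a1)) • 1) = 1)
    (ε εt : ℝ)
    (hε : ε = ‖ut - u‖ / ‖u‖)
    (hεt : εt = ‖(ut - u) - (Submodule.orthogonalProjectionOnto K (ut - u) : E)‖
                / ‖u - (Submodule.orthogonalProjectionOnto K u : E)‖) :
    ε ≤ 2 * ‖B‖ / (‖M‖⁻¹ * ‖f - (Submodule.orthogonalProjectionOnto K f : E)‖) * εt := by
  have hlamσ : lam - σ ≠ 0 := sub_ne_zero.mpr hlam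
  -- g lies in V = (span{x})ᗮ
  have hgV : g ∈ (Submodule.span ℂ {x})ᗮ :=
    Submodule.mem_orthogonal_singleton_iff_inner_right.mpr hxg
  set gv : (Submodule.span ℂ {x})ᗮ := ⟨g, hgV⟩ with hgvdef
  have hgvnorm : ‖gv‖ = 1 := by
    rw [← Submodule.norm_coe]; exact hg
  -- B y expanded
  have hBy2 : B y = (c * (lam - σ)⁻¹) • x + (s : ℂ) • B g := by
    rw [hdecomp, map_add, map_smul, map_smul, hBx, smul_smul]
  -- s is positive
  have hspos : 0 < s := by
    rcases hs.lt_or_eq with h | h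
    · exact h
    · exfalso
      have hxK : x ∈ K := by
        have h0 : ‖x - (Submodule.orthogonalProjectionOnto K x : E)‖ = 0 :=
          le_antisymm (h ▸ hsV) (norm_nonneg _)
        have := sub_eq_zero.mp (norm_eq_zero.mp h0)
        rw [this]; exact SetLike.coe_mem _
      have hyx : y = c • x := by rw [hdecomp, ← h]; simp
      have huK : u ∈ K := by
        rw [hu, hyx, map_smul, hBx]
        exact K.add_mem (K.smul_mem _ (K.smul_mem _ (K.smul_mem _ hxK)))
          (K.smul_mem _ (K.smul_mem _ hxK))
      exact hPu (by rw [sub_eq_zero, (show (Submodule.orthogonalProjectionOnto K u : E) = u from Submodule.starProjection_eq_self_iff.mpr huK)])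
  -- M inverts (L - α) pointwise
  have hMN : ∀ v : (Submodule.span ℂ {x})ᗮ, M ((L - (-(a2 / a1)) • 1) v) = v := fun v => by
    rw [← ContinuousLinearMap.mul_apply, hML, ContinuousLinearMap.one_apply]
  have hNg_lb : 1 ≤ ‖M‖ * ‖(L - (-(a2 / a1)) • 1) gv‖ := by
    calc (1 : ℝ) = ‖gv‖ := hgvnorm.symm
      _ = ‖M ((L - (-(a2 / a1)) • 1) gv)‖ := by rw [hMN]
      _ ≤ ‖M‖ * ‖(L - (-(a2 / a1)) • 1) gv‖ := M.le_opNorm _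
  have hm : 0 < ‖M‖ := by
    rcases (norm_nonneg M).lt_or_eq with h | h
    · exact h
    · exfalso; rw [← h, zero_mul] at hNg_lb; linarith
  have hb : 0 < ‖B‖ := by
    have : 0 < 1 / ‖lam - σ‖ :=
      one_div_pos.mpr (norm_pos_iff.mpr hlamσ)
    linarith
  -- projection of x onto V is zero
  have hxVp : x ∈ ((Submodule.span ℂ {x})ᗮ)ᗮ :=
    Submodule.le_orthogonal_orthogonal _ (Submodule.mem_span_singleton_self x)
  have hPVx : Submodule.orthogonalProjectionOnto (Submodule.span ℂ {x})ᗮ x = 0 :=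
    Submodule.orthogonalProjectionOnto_apply_of_mem_orthogonal hxVp
  have hPVg : Submodule.orthogonalProjectionOnto (Submodule.span ℂ {x})ᗮ g = gv :=
    Submodule.orthogonalProjectionOnto_mem_subspace_eq_self gv
  have hPVBg : Submodule.orthogonalProjectionOnto (Submodule.span ℂ {x})ᗮ (B g) = L gv := (hL gv).symm
  -- projection of u onto V
  have hPVu : Submodule.orthogonalProjectionOnto (Submodule.span ℂ {x})ᗮ u
      = (a1 * (s : ℂ)) • ((L - (-(a2 / a1)) • 1) gv) := by
    rw [hu, hBy2, hdecomp, map_add, map_smul, map_smul, map_add, map_smul, map_smul,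
      map_add, map_smul, map_smul, hPVx, hPVg, hPVBg]
    rw [ContinuousLinearMap.sub_apply, ContinuousLinearMap.smul_apply,
      ContinuousLinearMap.one_apply]
    match_scalars
    · ring
    · field_simp
  -- lower bound for ‖u‖
  have hlow : ‖a1‖ * s ≤ ‖M‖ * ‖u‖ := by
    have h1 : ‖(Submodule.orthogonalProjectionOnto (Submodule.span ℂ {x})ᗮ u :
        (Submodule.span ℂ {x})ᗮ)‖ = ‖a1‖ * s * ‖(L - (-(a2 / a1)) • 1) gv‖ := by
      rw [hPVu, norm_smul, norm_mul, Complex.norm_real, Real.norm_of_nonneg hs]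
    have h2 : ‖Submodule.orthogonalProjectionOnto (Submodule.span ℂ {x})ᗮ u‖ ≤ ‖u‖ := by
      rw [← Submodule.norm_coe]
      exact norm_orthProj_le _ u
    rw [h1] at h2
    have e1 := mul_le_mul_of_nonneg_left hNg_lb (mul_nonneg (norm_nonneg a1) hs)
    have e2 := mul_le_mul_of_nonneg_left h2 hm.le
    linarith [e1, e2]
  -- upper bound for ‖u - P_K u‖
  have hKy : (Submodule.orthogonalProjectionOnto K y : E) = y := Submodule.starProjection_eq_self_iff.mpr hyK
  have hdiff : u - (Submodule.orthogonalProjectionOnto K u : E)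
      = a1 • (B y - (Submodule.orthogonalProjectionOnto K (B y) : E)) := by
    rw [hu, map_add, map_smul, map_smul]
    push_cast
    rw [hKy]
    module
  have hByd : B y - (Submodule.orthogonalProjectionOnto K (B y) : E)
      = (c * (lam - σ)⁻¹) • (x - (Submodule.orthogonalProjectionOnto K x : E))
        + (s : ℂ) • (B g - (Submodule.orthogonalProjectionOnto K (B g) : E)) := by
    rw [hBy2, map_add, map_smul, map_smul]
    push_cast
    module
  have hupper : ‖u - (Submodule.orthogonalProjectionOnto K u : E)‖ ≤ ‖a1‖ * (s * (2 * ‖B‖)) := by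
    rw [hdiff, norm_smul]
    refine mul_le_mul_of_nonneg_left ?_ (norm_nonneg a1)
    rw [hByd]
    have h1 : ‖(c * (lam - σ)⁻¹) • (x - (Submodule.orthogonalProjectionOnto K x : E))‖ ≤ ‖B‖ * s := by
      rw [norm_smul, norm_mul, norm_inv]
      have h3 : (‖lam - σ‖)⁻¹ ≤ ‖B‖ := by rwa [one_div] at hB
      have h4 : (0:ℝ) ≤ (‖lam - σ‖)⁻¹ := inv_nonneg.mpr (norm_nonneg _)
      have hcl : ‖c‖ * (‖lam - σ‖)⁻¹ ≤ ‖B‖ := by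
        nlinarith [norm_nonneg c]
      exact mul_le_mul hcl hsV (norm_nonneg _) hb.le
    have h2 : ‖(s : ℂ) • (B g - (Submodule.orthogonalProjectionOnto K (B g) : E))‖ ≤ s * ‖B‖ := by
      rw [norm_smul, Complex.norm_real, Real.norm_of_nonneg hs]
      refine mul_le_mul_of_nonneg_left ?_ hs
      calc ‖B g - (Submodule.orthogonalProjectionOnto K (B g) : E)‖ ≤ ‖B g‖ := norm_sub_orthProj_le K _
        _ ≤ ‖B‖ * ‖g‖ := B.le_opNorm g
        _ = ‖B‖ := by rw [hg, mul_one]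
    calc ‖_ + _‖ ≤ ‖B‖ * s + s * ‖B‖ := le_trans (norm_add_le _ _) (add_le_add h1 h2)
      _ = s * (2 * ‖B‖) := by ring
  -- positivity facts
  have ht : 0 < ‖ut - u‖ := norm_pos_iff.mpr (sub_ne_zero.mpr hne)
  have hq : 0 < ‖u - (Submodule.orthogonalProjectionOnto K u : E)‖ := norm_pos_iff.mpr hPu
  have hnu : 0 < ‖u‖ := norm_pos_iff.mpr hune
  have hφ : 0 < ‖f - (Submodule.orthogonalProjectionOnto K f : E)‖ :=
    lt_of_le_of_ne (norm_nonneg _) (Ne.symm hfperp)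
  -- relate εt numerator to f
  have hw : ‖(ut - u) - (Submodule.orthogonalProjectionOnto K (ut - u) : E)‖
      = ‖ut - u‖ * ‖f - (Submodule.orthogonalProjectionOnto K f : E)‖ := by
    have hfd : f - (Submodule.orthogonalProjectionOnto K f : E)
        = ‖ut - u‖⁻¹ • ((ut - u) - (Submodule.orthogonalProjectionOnto K (ut - u) : E)) := by
      rw [hf, (Submodule.orthogonalProjectionOnto K).map_smul_of_tower, Submodule.coe_smul_of_tower,
        smul_sub, smul_sub, smul_sub]
    rw [hfd, norm_smul, norm_inv, norm_norm, ← mul_assoc, mul_inv_cancel₀ ht.ne', one_mul]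
  -- final arithmetic
  rw [hε, hεt, hw, div_mul_div_comm, div_le_div_iff₀ hnu
    (mul_pos (mul_pos (inv_pos.mpr hm) hφ) hq)]
  have key : ‖u - (Submodule.orthogonalProjectionOnto K u : E)‖ ≤ 2 * ‖B‖ * ‖M‖ * ‖u‖ := by
    have e3 := mul_le_mul_of_nonneg_left hlow (by positivity : (0:ℝ) ≤ 2 * ‖B‖)
    linarith [hupper, e3]
  have key2 : ‖M‖⁻¹ * ‖u - (Submodule.orthogonalProjectionOnto K u : E)‖ ≤ 2 * ‖B‖ * ‖u‖ := by
    rw [inv_mul_le_iff₀ hm]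
    linarith [key]
  have e4 := mul_le_mul_of_nonneg_left key2
    (mul_nonneg ht.le hφ.le : (0:ℝ) ≤ ‖ut - u‖ * ‖f - (Submodule.orthogonalProjectionOnto K f : E)‖)
  linarith [e4]
end

section
/- Let 𝒱_m ⊆ 𝒱_{m+1} ⊆ ⋯ be a nested sequence of subspaces where 𝒱_{i+1} = 𝒱_i ⊕ span{v_{i+1}} with v_{i+1} a unit vector orthogonal to 𝒱_i, let x be a unit vector and x_{i,⊥} = (I - P_{V_i})x, assumed nonzero for i = 1,…,m+1. Then sin∠(𝒱_{m+1}, x) = sin∠(𝒱_1, x) · ∏_{i=2}^{m+1} sin∠(v_i, x_{i-1,⊥}). -/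
local notation "⟪" x ", " y "⟫" => @inner ℂ _ _ x y

lemma proj_sup_span {E : Type*} [NormedAddCommGroup E] [InnerProductSpace ℂ E]
    [FiniteDimensional ℂ E] (V : Submodule ℂ E) (v x : E)
    (hv : ‖v‖ = 1) (hp : v ∈ Vᗮ) :
    (Submodule.orthogonalProjectionOnto (V ⊔ Submodule.span ℂ {v}) x : E)
      = (Submodule.orthogonalProjectionOnto V x : E) + ⟪v, x⟫ • v := by
  rw [← Submodule.starProjection_apply]
  apply Submodule.eq_starProjection_of_mem_orthogonal
  · exact Submodule.add_mem_sup (Submodule.orthogonalProjectionOnto V x).2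
      (Submodule.mem_span_singleton.2 ⟨_, rfl⟩)
  · rw [← Submodule.inf_orthogonal]
    refine Submodule.mem_inf.2 ⟨?_, ?_⟩
    · have h1 : x - (Submodule.orthogonalProjectionOnto V x : E) ∈ Vᗮ :=
        Submodule.sub_starProjection_mem_orthogonal x
      have : x - ((Submodule.orthogonalProjectionOnto V x : E) + ⟪v, x⟫ • v)
          = (x - (Submodule.orthogonalProjectionOnto V x : E)) - ⟪v, x⟫ • v := by abel
      rw [this]
      exact Submodule.sub_mem _ h1 (Submodule.smul_mem _ _ hp)
    · intro u hu
      rw [Submodule.mem_span_singleton] at hu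
      obtain ⟨c, rfl⟩ := hu
      rw [inner_smul_left, inner_sub_right, inner_add_right, inner_smul_right]
      have h0 : ⟪v, (Submodule.orthogonalProjectionOnto V x : E)⟫ = 0 :=
        (Submodule.mem_orthogonal' _ _).1 hp _ (Submodule.orthogonalProjectionOnto V x).2
      rw [h0, inner_self_eq_norm_sq_to_K, hv]
      push_cast
      ring

lemma inner_perp_eq {E : Type*} [NormedAddCommGroup E] [InnerProductSpace ℂ E]
    [FiniteDimensional ℂ E] (V : Submodule ℂ E) (v x : E) (hp : v ∈ Vᗮ) :
    ⟪v, x - (Submodule.orthogonalProjectionOnto V x : E)⟫ = ⟪v, x⟫ := by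
  rw [inner_sub_right,
    (Submodule.mem_orthogonal' _ _).1 hp _ (Submodule.orthogonalProjectionOnto V x).2, sub_zero]

/-- for a nested sequence of subspaces `𝒱_{i+1} = 𝒱_i ⊕ span{v_{i+1}}`
with each `v_{i+1}` a unit vector orthogonal to `𝒱_i`,
`sin∠(𝒱_{m+1}, x) = sin∠(𝒱_1, x) · ∏_{i=2}^{m+1} sin∠(v_i, x_{i-1,⊥})`,
where `x_{i,⊥} = (I - P_{V_i})x` and `sin∠(v, w) = ‖(I - vvᴴ)w‖/‖w‖`. -/
theorem sin_prod_formula {E : Type*} [NormedAddCommGroup E] [InnerProductSpace ℂ E]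
    [FiniteDimensional ℂ E] (m : ℕ)
    (V : Fin (m + 1) → Submodule ℂ E) (v : Fin m → E)
    (hvnorm : ∀ i : Fin m, ‖v i‖ = 1)
    (hvperp : ∀ i : Fin m, v i ∈ (V i.castSucc)ᗮ)
    (hVsucc : ∀ i : Fin m, V i.succ = V i.castSucc ⊔ Submodule.span ℂ {v i})
    (x : E) (hx : ‖x‖ = 1)
    (hxp : ∀ i : Fin (m + 1), x - (Submodule.orthogonalProjectionOnto (V i) x : E) ≠ 0) :
    ‖x - (Submodule.orthogonalProjectionOnto (V (Fin.last m)) x : E)‖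
      = ‖x - (Submodule.orthogonalProjectionOnto (V 0) x : E)‖
        * ∏ i : Fin m,
            (‖(x - (Submodule.orthogonalProjectionOnto (V i.castSucc) x : E))
                - ⟪v i, x - (Submodule.orthogonalProjectionOnto (V i.castSucc) x : E)⟫ • v i‖
              / ‖x - (Submodule.orthogonalProjectionOnto (V i.castSucc) x : E)‖) := by
  induction m with
  | zero => simp [Fin.last]
  | succ n ih =>
    have ih' := ih (fun i => V i.castSucc) (fun i => v i.castSucc)
      (fun i => hvnorm i.castSucc)
      (fun i => hvperp i.castSucc)
      (fun i => hVsucc i.castSucc)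
      (fun i => hxp i.castSucc)
    -- one-step identity at the last index
    have hlast : (Fin.last n).succ = Fin.last (n + 1) := rfl
    set W := V (Fin.last n).castSucc with hW
    set w := v (Fin.last n) with hw
    have hkey : x - (Submodule.orthogonalProjectionOnto (V (Fin.last (n + 1))) x : E)
        = (x - (Submodule.orthogonalProjectionOnto W x : E)) - ⟪w, x⟫ • w := by
      rw [← hlast, hVsucc (Fin.last n),
        proj_sup_span W w x (hvnorm _) (hvperp _)]
      abel
    have hinner : ⟪w, x - (Submodule.orthogonalProjectionOnto W x : E)⟫ = ⟪w, x⟫ :=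
      inner_perp_eq W w x (hvperp _)
    beta_reduce at ih'
    simp only [Fin.castSucc_zero] at ih'
    rw [Fin.prod_univ_castSucc, ← mul_assoc]
    erw [← ih']
    rw [hkey, hinner]
    have hne : ‖x - (Submodule.orthogonalProjectionOnto W x : E)‖ ≠ 0 :=
      norm_ne_zero_iff.2 (hxp (Fin.last n).castSucc)
    change ‖x - (Submodule.orthogonalProjectionOnto W x : E) - ⟪w, x⟫ • w‖ = ‖x - (Submodule.orthogonalProjectionOnto W x : E)‖ * (‖x - (Submodule.orthogonalProjectionOnto W x : E) - ⟪w, x⟫ • w‖ / ‖x - (Submodule.orthogonalProjectionOnto W x : E)‖)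
    field_simp
end
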